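/- Let a > 0, T > 0, κ ≥ 0 and integers 1 ≤ m < n. Let u_m, u_{m+1}, …, u_n : [0,T] → [0,∞) be continuous functions such that for every integer ℓ with m ≤ ℓ ≤ n−1 and every t ∈ [0,T], u_ℓ(t) ≤ e^{−a(ℓ−1)t}·u_ℓ(0) + ∫₀^t e^{−a(ℓ−1)(t−s)}·( κ·ℓ + a·ℓ·u_{ℓ+1}(s) ) ds. Then u_m(T) ≤ ∑_{ℓ=m}^{n−1} [ u_ℓ(0)·G̃_m^ℓ(T) + (κ/a)·F̃_m^ℓ(T) ] + F̃_m^{n−1}(T)·sup_{t∈[0,T]} u_n(t). -/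

import Mathlib

/-- Auxiliary recursion for `F̃_m^ℓ`, indexed by the gap `k = ℓ - m`. -/
noncomputable def Ftgap (a : ℝ) : ℕ → ℕ → ℝ → ℝ
  | 0, m, t => a * (m : ℝ) *
      ∫ s in (0 : ℝ)..t, Real.exp (-a * ((m : ℝ) - 1) * (t - s))
  | k + 1, m, t => a * (m : ℝ) *
      ∫ s in (0 : ℝ)..t, Real.exp (-a * ((m : ℝ) - 1) * (t - s)) * Ftgap a k (m + 1) s

/-- `F̃_m^ℓ(t)` for `m ≤ ℓ`, the iterated integral
`(∏_{j=m}^{ℓ} aj) ∫…∫ exp(-a ∑_{j=m}^{ℓ} (j-1)(t_j - t_{j+1})) dt_{ℓ+1} ⋯ dt_{m+1}`. -/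
noncomputable def Fthier (a : ℝ) (m ℓ : ℕ) (t : ℝ) : ℝ := Ftgap a (ℓ - m) m t

/-- Auxiliary recursion for `G̃_m^ℓ`, indexed by the gap `k = ℓ - m`. -/
noncomputable def Gtgap (a : ℝ) : ℕ → ℕ → ℝ → ℝ
  | 0, m, t => Real.exp (-a * ((m : ℝ) - 1) * t)
  | k + 1, m, t => a * (m : ℝ) *
      ∫ s in (0 : ℝ)..t, Real.exp (-a * ((m : ℝ) - 1) * (t - s)) * Gtgap a k (m + 1) s

/-- `G̃_m^ℓ(t)` for `m ≤ ℓ`, with `G̃_m^m(t) = e^{-a(m-1)t}`. -/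
noncomputable def Gthier (a : ℝ) (m ℓ : ℕ) (t : ℝ) : ℝ := Gtgap a (ℓ - m) m t

private lemma cont_kernel_int (c : ℝ) (f : ℝ → ℝ) (hf : Continuous f) :
    Continuous (fun t => ∫ s in (0:ℝ)..t, Real.exp (-(c * (t - s))) * f s) := by
  have hg : Continuous fun s => Real.exp (c * s) * f s :=
    (Real.continuous_exp.comp (continuous_const.mul continuous_id)).mul hf
  have h1 : (fun t => ∫ s in (0:ℝ)..t, Real.exp (-(c * (t - s))) * f s)
      = fun t => Real.exp (-(c * t)) * ∫ s in (0:ℝ)..t, Real.exp (c * s) * f s := by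
    funext t
    rw [← intervalIntegral.integral_const_mul]
    apply intervalIntegral.integral_congr
    intro s _
    show Real.exp (-(c * (t - s))) * f s = Real.exp (-(c * t)) * (Real.exp (c * s) * f s)
    rw [← mul_assoc, ← Real.exp_add]
    congr 1
    ring
  rw [h1]
  exact (Real.continuous_exp.comp (continuous_const.mul continuous_id).neg).mul
    (intervalIntegral.continuous_primitive (fun a b => hg.intervalIntegrable a b) 0)

private lemma Ftgap_cont (a : ℝ) : ∀ k m, Continuous (fun t => Ftgap a k m t)
  | 0, m => by
      have h := cont_kernel_int (a * ((m : ℝ) - 1)) (fun _ => (1:ℝ)) continuous_const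
      simp only [mul_one] at h
      simp only [Ftgap, neg_mul]
      exact continuous_const.mul h
  | k + 1, m => by
      have h := cont_kernel_int (a * ((m : ℝ) - 1)) _ (Ftgap_cont a k (m + 1))
      simp only [Ftgap, neg_mul]
      exact continuous_const.mul h

private lemma Gtgap_cont (a : ℝ) : ∀ k m, Continuous (fun t => Gtgap a k m t)
  | 0, m => by
      simp only [Gtgap, neg_mul]
      exact Real.continuous_exp.comp (continuous_const.mul continuous_id).neg
  | k + 1, m => by
      have h := cont_kernel_int (a * ((m : ℝ) - 1)) _ (Gtgap_cont a k (m + 1))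
      simp only [Gtgap, neg_mul]
      exact continuous_const.mul h

set_option maxHeartbeats 1000000 in
/-- Splitting of the kernel integral against a linear combination. -/
private lemma integral_comb (c A C Mv : ℝ) (t : ℝ) (S : Finset ℕ) (w v : ℕ → ℝ)
    (G F : ℕ → ℝ → ℝ) (Ft : ℝ → ℝ)
    (hG : ∀ j ∈ S, Continuous (G j)) (hF : ∀ j ∈ S, Continuous (F j))
    (hFt : Continuous Ft) :
    (∫ s in (0:ℝ)..t, Real.exp (-(c * (t - s))) *
        (C + A * ((∑ j ∈ S, (w j * G j s + v j * F j s)) + Ft s * Mv)))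
    = C * (∫ s in (0:ℝ)..t, Real.exp (-(c * (t - s))))
      + ((∑ j ∈ S, (w j * (A * ∫ s in (0:ℝ)..t, Real.exp (-(c * (t - s))) * G j s)
          + v j * (A * ∫ s in (0:ℝ)..t, Real.exp (-(c * (t - s))) * F j s)))
        + (A * ∫ s in (0:ℝ)..t, Real.exp (-(c * (t - s))) * Ft s) * Mv) := by
  have hker : Continuous fun s => Real.exp (-(c * (t - s))) :=
    Real.continuous_exp.comp (continuous_const.mul (continuous_const.sub continuous_id)).neg
  have hptwise : ∀ s : ℝ, Real.exp (-(c * (t - s))) *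
        (C + A * ((∑ j ∈ S, (w j * G j s + v j * F j s)) + Ft s * Mv))
      = C * Real.exp (-(c * (t - s)))
        + ((∑ j ∈ S, (w j * (A * (Real.exp (-(c * (t - s))) * G j s))
            + v j * (A * (Real.exp (-(c * (t - s))) * F j s))))
          + (A * (Real.exp (-(c * (t - s))) * Ft s)) * Mv) := by
    intro s
    have hsum : (∑ j ∈ S, (w j * (A * (Real.exp (-(c * (t - s))) * G j s))
            + v j * (A * (Real.exp (-(c * (t - s))) * F j s))))
        = (A * Real.exp (-(c * (t - s)))) * ∑ j ∈ S, (w j * G j s + v j * F j s) := by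
      rw [Finset.mul_sum]
      exact Finset.sum_congr rfl fun j _ => by ring
    rw [hsum]
    ring
  rw [show (fun s => Real.exp (-(c * (t - s))) *
        (C + A * ((∑ j ∈ S, (w j * G j s + v j * F j s)) + Ft s * Mv)))
      = (fun s => C * Real.exp (-(c * (t - s)))
        + ((∑ j ∈ S, (w j * (A * (Real.exp (-(c * (t - s))) * G j s))
            + v j * (A * (Real.exp (-(c * (t - s))) * F j s))))
          + (A * (Real.exp (-(c * (t - s))) * Ft s)) * Mv)) from funext hptwise]
  have hintj : ∀ j ∈ S, IntervalIntegrable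
      (fun s => w j * (A * (Real.exp (-(c * (t - s))) * G j s))
        + v j * (A * (Real.exp (-(c * (t - s))) * F j s))) MeasureTheory.volume 0 t := by
    intro j hj
    exact ((continuous_const.mul (continuous_const.mul (hker.mul (hG j hj)))).add
      (continuous_const.mul (continuous_const.mul (hker.mul (hF j hj))))).intervalIntegrable 0 t
  have hint1 : IntervalIntegrable (fun s => C * Real.exp (-(c * (t - s))))
      MeasureTheory.volume 0 t := (continuous_const.mul hker).intervalIntegrable 0 t
  have hintS : IntervalIntegrable
      (fun s => ∑ j ∈ S, (w j * (A * (Real.exp (-(c * (t - s))) * G j s))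
        + v j * (A * (Real.exp (-(c * (t - s))) * F j s)))) MeasureTheory.volume 0 t := by
    have hs := IntervalIntegrable.sum S (f := fun j s => w j * (A * (Real.exp (-(c * (t - s))) * G j s))
        + v j * (A * (Real.exp (-(c * (t - s))) * F j s))) hintj
    simpa [Finset.sum_fn] using hs
  have hintFt : IntervalIntegrable
      (fun s => (A * (Real.exp (-(c * (t - s))) * Ft s)) * Mv) MeasureTheory.volume 0 t :=
    ((continuous_const.mul (hker.mul hFt)).mul continuous_const).intervalIntegrable 0 t
  rw [intervalIntegral.integral_add hint1 (hintS.add hintFt),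
    intervalIntegral.integral_add hintS hintFt,
    intervalIntegral.integral_const_mul,
    intervalIntegral.integral_finset_sum hintj,
    intervalIntegral.integral_mul_const]
  congr 1
  congr 1
  · apply Finset.sum_congr rfl
    intro j hj
    rw [intervalIntegral.integral_add
        (f := fun s => w j * (A * (Real.exp (-(c * (t - s))) * G j s)))
        (g := fun s => v j * (A * (Real.exp (-(c * (t - s))) * F j s)))
        ((continuous_const.mul (continuous_const.mul (hker.mul (hG j hj)))).intervalIntegrable 0 t)
        ((continuous_const.mul (continuous_const.mul (hker.mul (hF j hj)))).intervalIntegrable 0 t),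
      intervalIntegral.integral_const_mul, intervalIntegral.integral_const_mul,
      intervalIntegral.integral_const_mul, intervalIntegral.integral_const_mul]
  · rw [intervalIntegral.integral_const_mul]

/-- Iteration lemma for the hierarchy of Grönwall-type integral inequalities:
bound on the `m`-th level in terms of the iterated kernels `F̃` and `G̃`. -/
theorem hierarchy_iteration (a T κ : ℝ) (ha : 0 < a) (hT : 0 < T) (hκ : 0 ≤ κ)
    (m n : ℕ) (hm : 1 ≤ m) (hmn : m < n)
    (u : ℕ → ℝ → ℝ)
    (hcont : ∀ ℓ, m ≤ ℓ → ℓ ≤ n → ContinuousOn (u ℓ) (Set.Icc 0 T))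
    (hnonneg : ∀ ℓ, m ≤ ℓ → ℓ ≤ n → ∀ t ∈ Set.Icc (0 : ℝ) T, 0 ≤ u ℓ t)
    (hrec : ∀ ℓ, m ≤ ℓ → ℓ ≤ n - 1 → ∀ t ∈ Set.Icc (0 : ℝ) T,
      u ℓ t ≤ Real.exp (-a * ((ℓ : ℝ) - 1) * t) * u ℓ 0
        + ∫ s in (0 : ℝ)..t,
            Real.exp (-a * ((ℓ : ℝ) - 1) * (t - s))
              * (κ * (ℓ : ℝ) + a * (ℓ : ℝ) * u (ℓ + 1) s)) :
    u m T ≤ (∑ ℓ ∈ Finset.Icc m (n - 1),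
        (u ℓ 0 * Gthier a m ℓ T + (κ / a) * Fthier a m ℓ T))
      + Fthier a m (n - 1) T * sSup (u n '' Set.Icc 0 T) := by
  have ha' : a ≠ 0 := ne_of_gt ha
  set M := sSup (u n '' Set.Icc 0 T) with hMdef
  have hTmem : T ∈ Set.Icc (0:ℝ) T := ⟨le_of_lt hT, le_refl T⟩
  have hMle : ∀ s ∈ Set.Icc (0:ℝ) T, u n s ≤ M := by
    intro s hs
    exact le_csSup ((isCompact_Icc.image_of_continuousOn
      (hcont n (le_of_lt hmn) le_rfl)).bddAbove) (Set.mem_image_of_mem _ hs)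
  have key : ∀ k, ∀ ℓ, m ≤ ℓ → ℓ + k = n - 1 → ∀ t ∈ Set.Icc (0:ℝ) T,
      u ℓ t ≤ (∑ j ∈ Finset.Icc ℓ (n-1),
          (u j 0 * Gtgap a (j - ℓ) ℓ t + (κ / a) * Ftgap a (j - ℓ) ℓ t))
        + Ftgap a k ℓ t * M := by
    intro k
    induction k with
    | zero =>
      intro ℓ hmℓ hℓ t ht
      have hℓn : ℓ = n - 1 := by omega
      have hℓ1 : ℓ + 1 = n := by omega
      have hker : Continuous fun s => Real.exp (-a * ((ℓ:ℝ) - 1) * (t - s)) := by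
        simp only [neg_mul]
        exact Real.continuous_exp.comp
          (continuous_const.mul (continuous_const.sub continuous_id)).neg
      have h1 := hrec ℓ hmℓ (by omega) t ht
      have h2 : (∫ s in (0:ℝ)..t, Real.exp (-a * ((ℓ:ℝ) - 1) * (t - s))
            * (κ * (ℓ:ℝ) + a * (ℓ:ℝ) * u (ℓ + 1) s))
          ≤ ∫ s in (0:ℝ)..t, Real.exp (-a * ((ℓ:ℝ) - 1) * (t - s))
            * (κ * (ℓ:ℝ) + a * (ℓ:ℝ) * M) := by
        apply intervalIntegral.integral_mono_on ht.1
        · apply ContinuousOn.intervalIntegrable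
          rw [Set.uIcc_of_le ht.1]
          apply ContinuousOn.mul hker.continuousOn
          apply ContinuousOn.add continuousOn_const
          apply ContinuousOn.mul continuousOn_const
          rw [hℓ1]
          exact (hcont n (le_of_lt hmn) le_rfl).mono (Set.Icc_subset_Icc_right ht.2)
        · exact (hker.mul continuous_const).intervalIntegrable 0 t
        · intro s hs
          have hsT : s ∈ Set.Icc (0:ℝ) T := ⟨hs.1, le_trans hs.2 ht.2⟩
          apply mul_le_mul_of_nonneg_left _ (Real.exp_nonneg _)
          apply add_le_add_right
          apply mul_le_mul_of_nonneg_left _ (by positivity)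
          rw [hℓ1]
          exact hMle s hsT
      have h3 : (∫ s in (0:ℝ)..t, Real.exp (-a * ((ℓ:ℝ) - 1) * (t - s))
            * (κ * (ℓ:ℝ) + a * (ℓ:ℝ) * M))
          = (κ * (ℓ:ℝ) + a * (ℓ:ℝ) * M)
            * ∫ s in (0:ℝ)..t, Real.exp (-a * ((ℓ:ℝ) - 1) * (t - s)) := by
        rw [intervalIntegral.integral_mul_const]
        ring
      rw [← hℓn, Finset.Icc_self, Finset.sum_singleton, Nat.sub_self]
      have hG0 : Gtgap a 0 ℓ t = Real.exp (-a * ((ℓ:ℝ) - 1) * t) := rfl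
      have hF0 : Ftgap a 0 ℓ t
          = a * (ℓ:ℝ) * ∫ s in (0:ℝ)..t, Real.exp (-a * ((ℓ:ℝ) - 1) * (t - s)) := rfl
      have hκa : κ / a * (a * (ℓ:ℝ)) = κ * (ℓ:ℝ) := by field_simp
      calc u ℓ t ≤ Real.exp (-a * ((ℓ:ℝ) - 1) * t) * u ℓ 0
            + ∫ s in (0:ℝ)..t, Real.exp (-a * ((ℓ:ℝ) - 1) * (t - s))
              * (κ * (ℓ:ℝ) + a * (ℓ:ℝ) * u (ℓ + 1) s) := h1
        _ ≤ Real.exp (-a * ((ℓ:ℝ) - 1) * t) * u ℓ 0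
            + (κ * (ℓ:ℝ) + a * (ℓ:ℝ) * M)
              * ∫ s in (0:ℝ)..t, Real.exp (-a * ((ℓ:ℝ) - 1) * (t - s)) := by
          rw [← h3]; exact add_le_add_right h2 _
        _ = u ℓ 0 * Gtgap a 0 ℓ t + κ / a * Ftgap a 0 ℓ t + Ftgap a 0 ℓ t * M := by
          rw [hG0, hF0]
          rw [show κ / a * (a * (ℓ:ℝ) * ∫ s in (0:ℝ)..t,
              Real.exp (-a * ((ℓ:ℝ) - 1) * (t - s)))
            = (κ / a * (a * (ℓ:ℝ))) * ∫ s in (0:ℝ)..t,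
              Real.exp (-a * ((ℓ:ℝ) - 1) * (t - s)) from by ring, hκa]
          ring
    | succ k ih =>
      intro ℓ hmℓ hℓ t ht
      have hℓn1 : ℓ + 1 ≤ n - 1 := by omega
      have hℓle : ℓ ≤ n - 1 := by omega
      have ihs := ih (ℓ + 1) (by omega) (by omega)
      have hker : Continuous fun s => Real.exp (-a * ((ℓ:ℝ) - 1) * (t - s)) := by
        simp only [neg_mul]
        exact Real.continuous_exp.comp
          (continuous_const.mul (continuous_const.sub continuous_id)).neg
      set S : Finset ℕ := Finset.Icc (ℓ + 1) (n - 1) with hS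
      set Bf : ℝ → ℝ := fun s =>
        (∑ j ∈ S, (u j 0 * Gtgap a (j - (ℓ+1)) (ℓ+1) s
          + (κ / a) * Ftgap a (j - (ℓ+1)) (ℓ+1) s)) + Ftgap a k (ℓ+1) s * M with hBf
      have hBfcont : Continuous Bf := by
        apply Continuous.add
        · apply continuous_finset_sum
          intro j hj
          exact (continuous_const.mul (Gtgap_cont a _ _)).add
            (continuous_const.mul (Ftgap_cont a _ _))
        · exact (Ftgap_cont a k (ℓ+1)).mul continuous_const
      have h1 := hrec ℓ hmℓ hℓle t ht
      have h2 : (∫ s in (0:ℝ)..t, Real.exp (-a * ((ℓ:ℝ) - 1) * (t - s))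
            * (κ * (ℓ:ℝ) + a * (ℓ:ℝ) * u (ℓ + 1) s))
          ≤ ∫ s in (0:ℝ)..t, Real.exp (-a * ((ℓ:ℝ) - 1) * (t - s))
            * (κ * (ℓ:ℝ) + a * (ℓ:ℝ) * Bf s) := by
        apply intervalIntegral.integral_mono_on ht.1
        · apply ContinuousOn.intervalIntegrable
          rw [Set.uIcc_of_le ht.1]
          apply ContinuousOn.mul hker.continuousOn
          apply ContinuousOn.add continuousOn_const
          apply ContinuousOn.mul continuousOn_const
          exact (hcont (ℓ+1) (by omega) (by omega)).mono (Set.Icc_subset_Icc_right ht.2)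
        · exact (hker.mul (continuous_const.add
            (continuous_const.mul hBfcont))).intervalIntegrable 0 t
        · intro s hs
          have hsT : s ∈ Set.Icc (0:ℝ) T := ⟨hs.1, le_trans hs.2 ht.2⟩
          apply mul_le_mul_of_nonneg_left _ (Real.exp_nonneg _)
          apply add_le_add_right
          exact mul_le_mul_of_nonneg_left (ihs s hsT) (by positivity)
      have hcomb := integral_comb (a * ((ℓ:ℝ) - 1)) (a * (ℓ:ℝ)) (κ * (ℓ:ℝ)) M t S
        (fun j => u j 0) (fun _ => κ / a)
        (fun j => Gtgap a (j - (ℓ+1)) (ℓ+1)) (fun j => Ftgap a (j - (ℓ+1)) (ℓ+1))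
        (Ftgap a k (ℓ+1))
        (fun j _ => Gtgap_cont a _ _) (fun j _ => Ftgap_cont a _ _) (Ftgap_cont a k (ℓ+1))
      simp only [neg_mul] at hcomb h1 h2 ⊢
      have h3 : (∫ s in (0:ℝ)..t, Real.exp (-(a * ((ℓ:ℝ) - 1) * (t - s)))
            * (κ * (ℓ:ℝ) + a * (ℓ:ℝ) * Bf s))
          = κ * (ℓ:ℝ) * (∫ s in (0:ℝ)..t, Real.exp (-(a * ((ℓ:ℝ) - 1) * (t - s))))
            + ((∑ j ∈ S, (u j 0 * Gtgap a (j - ℓ) ℓ t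
                + (κ / a) * Ftgap a (j - ℓ) ℓ t))
              + Ftgap a (k+1) ℓ t * M) := by
        rw [hcomb]
        congr 1
        congr 1
        · apply Finset.sum_congr rfl
          intro j hj
          have hjmem : ℓ + 1 ≤ j := (Finset.mem_Icc.mp hj).1
          have hjl : j - ℓ = (j - (ℓ+1)) + 1 := by omega
          rw [hjl]
          have hGsucc : Gtgap a ((j - (ℓ+1)) + 1) ℓ t = a * (ℓ:ℝ) *
              ∫ s in (0:ℝ)..t, Real.exp (-a * ((ℓ:ℝ) - 1) * (t - s))
                * Gtgap a (j - (ℓ+1)) (ℓ+1) s := rfl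
          have hFsucc : Ftgap a ((j - (ℓ+1)) + 1) ℓ t = a * (ℓ:ℝ) *
              ∫ s in (0:ℝ)..t, Real.exp (-a * ((ℓ:ℝ) - 1) * (t - s))
                * Ftgap a (j - (ℓ+1)) (ℓ+1) s := rfl
          simp only [neg_mul] at hGsucc hFsucc
          rw [hGsucc, hFsucc]
        · have hFsucc : Ftgap a (k + 1) ℓ t = a * (ℓ:ℝ) *
              ∫ s in (0:ℝ)..t, Real.exp (-a * ((ℓ:ℝ) - 1) * (t - s))
                * Ftgap a k (ℓ+1) s := rfl
          simp only [neg_mul] at hFsucc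
          rw [hFsucc]
      have hκF0 : κ * (ℓ:ℝ) * (∫ s in (0:ℝ)..t, Real.exp (-(a * ((ℓ:ℝ) - 1) * (t - s))))
          = (κ / a) * Ftgap a 0 ℓ t := by
        have hF0 : Ftgap a 0 ℓ t
            = a * (ℓ:ℝ) * ∫ s in (0:ℝ)..t, Real.exp (-a * ((ℓ:ℝ) - 1) * (t - s)) := rfl
        simp only [neg_mul] at hF0
        rw [hF0]
        field_simp
      have hinsert : Finset.Icc ℓ (n - 1) = insert ℓ S := by
        rw [hS]
        ext x
        simp only [Finset.mem_Icc, Finset.mem_insert]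
        omega
      have hnotmem : ℓ ∉ S := by
        rw [hS]; simp only [Finset.mem_Icc]; omega
      have hG0 : Gtgap a 0 ℓ t = Real.exp (-(a * ((ℓ:ℝ) - 1) * t)) := by
        simp only [Gtgap, neg_mul]
      calc u ℓ t ≤ Real.exp (-(a * ((ℓ:ℝ) - 1) * t)) * u ℓ 0
            + ∫ s in (0:ℝ)..t, Real.exp (-(a * ((ℓ:ℝ) - 1) * (t - s)))
              * (κ * (ℓ:ℝ) + a * (ℓ:ℝ) * u (ℓ + 1) s) := h1
        _ ≤ Real.exp (-(a * ((ℓ:ℝ) - 1) * t)) * u ℓ 0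
            + ∫ s in (0:ℝ)..t, Real.exp (-(a * ((ℓ:ℝ) - 1) * (t - s)))
              * (κ * (ℓ:ℝ) + a * (ℓ:ℝ) * Bf s) := add_le_add_right h2 _
        _ = (∑ j ∈ Finset.Icc ℓ (n-1), (u j 0 * Gtgap a (j - ℓ) ℓ t
              + (κ / a) * Ftgap a (j - ℓ) ℓ t)) + Ftgap a (k+1) ℓ t * M := by
          rw [h3, hκF0, hinsert, Finset.sum_insert hnotmem, Nat.sub_self, hG0]
          ring
  have hm1 : m + (n - 1 - m) = n - 1 := by omega
  have hfin := key (n - 1 - m) m le_rfl hm1 T hTmem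
  simpa only [Fthier, Gthier] using hfin
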